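/- Let L be a finite relatively complemented lattice with minimal element 0 and maximal element e such that μ(x,y) ≠ 0 for all x ≤ y with (x,y) ≠ (0,e). Then L is SSP: every family F ⊆ L satisfies |Str(F)| ≥ |F|. -/

import Mathlib

open scoped Classical

/-- `F` shatters `z`: for every `x ≤ z` there is `w ∈ F` with `w ⊓ z = x`. -/
def Shatters {L : Type*} [SemilatticeInf L] (F : Set L) (z : L) : Prop :=
  ∀ x ≤ z, ∃ w ∈ F, w ⊓ z = x

/-- The set of elements shattered by `F`. -/
def Str {L : Type*} [SemilatticeInf L] (F : Set L) : Set L := {z | Shatters F z}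


/-- The Möbius function of a finite poset. -/
noncomputable def mu {L : Type*} [PartialOrder L] [Fintype L] (x y : L) : ℚ :=
  if x = y then 1
  else if x ≤ y then
    - ∑ z ∈ (Finset.univ.filter fun z => x ≤ z ∧ z < y).attach, mu x z.1
  else 0
termination_by (Finset.univ.filter fun z : L => z < y).card
decreasing_by
  · have hz := (Finset.mem_filter.mp z.2).2.2
    apply Finset.card_lt_card
    constructor
    · intro w hw
      simp only [Finset.mem_filter, Finset.mem_univ, true_and] at hw ⊢
      exact hw.trans hz
    · intro hsub
      have hmem : z.1 ∈ Finset.univ.filter fun w : L => w < y := by simp [hz]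
      have := hsub hmem
      simp at this


/-- A finite lattice is relatively complemented iff it has no 3-element interval
(Björner's characterization). -/
def IsRC (L : Type*) [Lattice L] : Prop :=
  ¬ ∃ x y : L, x < y ∧ ∃! z : L, x < z ∧ z < y

/-- Fundamental Möbius identity: summing `mu x t` over `x ≤ t ≤ m` gives `δ(x,m)`. -/
lemma mu_sum {L : Type*} [PartialOrder L] [Fintype L] (x m : L) :
    ∑ t ∈ Finset.univ.filter (fun t => x ≤ t ∧ t ≤ m), mu x t
      = if m = x then 1 else 0 := by
  by_cases hxm : x ≤ m
  · rcases eq_or_lt_of_le hxm with h | h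
    · subst h
      have hf : Finset.univ.filter (fun t : L => x ≤ t ∧ t ≤ x) = {x} := by
        ext t
        simp only [Finset.mem_filter, Finset.mem_univ, true_and, Finset.mem_singleton]
        constructor
        · rintro ⟨h1, h2⟩; exact le_antisymm h2 h1
        · rintro rfl; exact ⟨le_rfl, le_rfl⟩
      rw [hf, Finset.sum_singleton, if_pos rfl, mu, if_pos rfl]
    · have hsplit : Finset.univ.filter (fun t : L => x ≤ t ∧ t ≤ m)
          = insert m (Finset.univ.filter (fun t : L => x ≤ t ∧ t < m)) := by
        ext t
        simp only [Finset.mem_filter, Finset.mem_univ, true_and, Finset.mem_insert]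
        constructor
        · rintro ⟨h1, h2⟩
          rcases eq_or_lt_of_le h2 with h3 | h3
          · exact Or.inl h3
          · exact Or.inr ⟨h1, h3⟩
        · rintro (rfl | ⟨h1, h2⟩)
          · exact ⟨hxm, le_rfl⟩
          · exact ⟨h1, h2.le⟩
      rw [hsplit, Finset.sum_insert (by simp), if_neg (ne_of_gt h)]
      rw [mu, if_neg (ne_of_lt h), if_pos hxm, Finset.sum_attach]
      ring
  · have hf : Finset.univ.filter (fun t : L => x ≤ t ∧ t ≤ m) = ∅ := by
      ext t
      simp only [Finset.mem_filter, Finset.mem_univ, true_and, Finset.notMem_empty, iff_false]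
      rintro ⟨h1, h2⟩; exact hxm (h1.trans h2)
    rw [hf, Finset.sum_empty, if_neg (fun h : m = x => hxm (h ▸ le_rfl))]

/-- Möbius expansion of the indicator of `w ⊓ z = x`. -/
lemma mu_key {L : Type*} [Lattice L] [Fintype L] (x z w : L) :
    ∑ t ∈ Finset.univ.filter (fun t => x ≤ t ∧ t ≤ z),
      mu x t * (if t ≤ w then (1:ℚ) else 0)
      = if w ⊓ z = x then 1 else 0 := by
  have h1 : ∑ t ∈ Finset.univ.filter (fun t => x ≤ t ∧ t ≤ z),
      mu x t * (if t ≤ w then (1:ℚ) else 0)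
      = ∑ t ∈ Finset.univ.filter (fun t => x ≤ t ∧ t ≤ w ⊓ z), mu x t := by
    rw [Finset.sum_congr rfl (fun t _ => (mul_ite _ _ _ _).trans (by rw [mul_one, mul_zero]))]
    rw [Finset.sum_ite, Finset.sum_const, smul_zero, add_zero]
    apply Finset.sum_congr _ (fun _ _ => rfl)
    ext t
    simp only [Finset.mem_filter, Finset.mem_univ, true_and, le_inf_iff]
    tauto
  rw [h1, mu_sum]

/-- In a finite lattice with no 3-element interval, every `z ≠ ⊤` admits a
nonzero element disjoint from it. -/
lemma exists_disjoint {L : Type*} [Lattice L] [Fintype L] [BoundedOrder L]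
    (hRC : IsRC L) (z : L) (hz : z ≠ ⊤) : ∃ w : L, w ≠ ⊥ ∧ w ⊓ z = ⊥ := by
  by_contra h
  push_neg at h
  obtain ⟨w, hw, hwmin⟩ : ∃ m ∈ Finset.univ.filter (fun w : L => ¬ w ≤ z),
      ∀ x ∈ Finset.univ.filter (fun w : L => ¬ w ≤ z), ¬ x < m := by
    obtain ⟨m, hm⟩ := Finset.exists_minimal (s := Finset.univ.filter (fun w : L => ¬ w ≤ z))
      ⟨⊤, by simpa using hz⟩
    exact ⟨m, hm.1, fun x hx hlt => hlt.not_ge (hm.2 hx hlt.le)⟩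
  simp only [Finset.mem_filter, Finset.mem_univ, true_and] at hw
  have hwmin' : ∀ u, u < w → u ≤ z := by
    intro u hu
    by_contra hc
    exact hwmin u (by simp [hc]) hu
  set d := z ⊓ w with hd
  have hd0 : d ≠ ⊥ := by
    intro hc
    rcases eq_or_ne w ⊥ with rfl | hw0
    · exact hw bot_le
    · exact h w hw0 (by rw [inf_comm]; exact hc)
  have hdw : d < w := lt_of_le_of_ne inf_le_right (fun e => hw (e ▸ inf_le_left))
  obtain ⟨c, hc, hcmax⟩ : ∃ m ∈ Finset.univ.filter (fun u : L => u < d),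
      ∀ x ∈ Finset.univ.filter (fun u : L => u < d), ¬ m < x := by
    obtain ⟨m, hm⟩ := Finset.exists_maximal (s := Finset.univ.filter (fun u : L => u < d))
      ⟨⊥, by simp [bot_lt_iff_ne_bot.mpr hd0]⟩
    exact ⟨m, hm.1, fun x hx hlt => hlt.not_ge (hm.2 hx hlt.le)⟩
  simp only [Finset.mem_filter, Finset.mem_univ, true_and] at hc
  apply hRC
  refine ⟨c, w, hc.trans hdw, d, ⟨hc, hdw⟩, ?_⟩
  rintro u ⟨hcu, huw⟩
  have hud : u ≤ d := le_inf (hwmin' u huw) huw.le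
  rcases eq_or_lt_of_le hud with h' | h'
  · exact h'
  · exact absurd hcu (hcmax u (by simp [h']))

/-- The "column" of `z`: the indicator, on `F`, of the up-set of `z`. -/
noncomputable def col {L : Type*} (F : Set L) [Preorder L] (z : L) : ↥F → ℚ :=
  fun w => if z ≤ (w : L) then 1 else 0

lemma col_apply {L : Type*} (F : Set L) [Preorder L] (z : L) (w : ↥F) :
    col F z w = if z ≤ (w : L) then 1 else 0 := rfl

/-- The linear-algebra core: if every unshattered `z` has a witness with
nonvanishing Möbius value, then `|F| ≤ |Str F|`. -/
lemma caseB {L : Type*} [Lattice L] [Fintype L] [BoundedOrder L]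
    (F : Set L)
    (hwit : ∀ z : L, z ∉ Str F → ∃ x, x ≤ z ∧ (∀ w ∈ F, w ⊓ z ≠ x) ∧ mu x z ≠ 0) :
    F.ncard ≤ (Str F).ncard := by
  haveI : Fintype ↥F := Fintype.ofFinite _
  have hspan1 : ∀ z : L, col F z ∈ Submodule.span ℚ (col F '' Str F) := by
    intro z
    induction z using WellFoundedLT.induction with
    | _ z ih =>
      by_cases hz : z ∈ Str F
      · exact Submodule.subset_span ⟨z, hz, rfl⟩
      obtain ⟨x, hxz, hxw, hmuz⟩ := hwit z hz
      have hkey : ∀ w : ↥F,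
          mu x z * col F z w
            + ∑ t ∈ Finset.univ.filter (fun t : L => x ≤ t ∧ t < z),
                mu x t * col F t w = 0 := by
        intro w
        have h0 := mu_key x z (w : L)
        rw [if_neg (hxw w w.2)] at h0
        have hsplit : Finset.univ.filter (fun t : L => x ≤ t ∧ t ≤ z)
            = insert z (Finset.univ.filter (fun t : L => x ≤ t ∧ t < z)) := by
          ext t
          simp only [Finset.mem_filter, Finset.mem_univ, true_and, Finset.mem_insert]
          constructor
          · rintro ⟨h1, h2⟩
            rcases eq_or_lt_of_le h2 with h3 | h3
            · exact Or.inl h3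
            · exact Or.inr ⟨h1, h3⟩
          · rintro (rfl | ⟨h1, h2⟩)
            · exact ⟨hxz, le_rfl⟩
            · exact ⟨h1, h2.le⟩
        rw [hsplit, Finset.sum_insert (by simp)] at h0
        simpa only [col_apply] using h0
      have hcolz : col F z = (-(mu x z)⁻¹)
          • ∑ t ∈ Finset.univ.filter (fun t : L => x ≤ t ∧ t < z), mu x t • col F t := by
        funext w
        have h0 := hkey w
        simp only [Pi.smul_apply, Finset.sum_apply, smul_eq_mul]
        field_simp
        linear_combination h0
      rw [hcolz]
      exact Submodule.smul_mem _ _ (Submodule.sum_mem _ fun t ht =>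
        Submodule.smul_mem _ _ (ih t (Finset.mem_filter.mp ht).2.2))
  have hspan2 : ∀ w : ↥F,
      (Pi.single w 1 : ↥F → ℚ) ∈ Submodule.span ℚ (col F '' Str F) := by
    intro w
    have hrep : (Pi.single w 1 : ↥F → ℚ)
        = ∑ t ∈ Finset.univ.filter (fun t : L => (w : L) ≤ t ∧ t ≤ ⊤),
            mu (w : L) t • col F t := by
      funext w'
      rw [Finset.sum_apply]
      simp only [Pi.smul_apply, smul_eq_mul, col_apply]
      rw [mu_key (w : L) ⊤ (w' : L)]
      rw [inf_top_eq]
      rw [Pi.single_apply]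
      by_cases h : w' = w
      · rw [if_pos h, if_pos (by rw [h])]
      · rw [if_neg h, if_neg (fun hc => h (Subtype.ext hc))]
    rw [hrep]
    exact Submodule.sum_mem _ fun t _ => Submodule.smul_mem _ _ (hspan1 t)
  have htop : Submodule.span ℚ (col F '' Str F) = ⊤ := by
    rw [eq_top_iff, ← (Pi.basisFun ℚ ↥F).span_eq]
    apply Submodule.span_le.mpr
    rintro v ⟨w, rfl⟩
    simpa [Pi.basisFun_apply] using hspan2 w
  haveI : Fintype ↥(col F '' Str F) := Fintype.ofFinite _
  have h2 : Module.finrank ℚ (↥F → ℚ) ≤ (col F '' Str F).toFinset.card := by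
    have h3 := finrank_span_le_card (R := ℚ) (col F '' Str F)
    rw [htop] at h3
    simpa [finrank_top] using h3
  have h4 : F.ncard = Fintype.card ↥F := by
    rw [← Nat.card_coe_set_eq, Nat.card_eq_fintype_card]
  have h5 : (col F '' Str F).toFinset.card = (col F '' Str F).ncard :=
    (Set.ncard_eq_toFinset_card' _).symm
  have h6 : (col F '' Str F).ncard ≤ (Str F).ncard :=
    Set.ncard_image_le (Set.toFinite _)
  rw [h4, ← Module.finrank_fintype_fun_eq_card ℚ]
  omega

/-- A finite RC lattice whose Möbius function vanishes nowhere except possibly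
on `(⊥, ⊤)` is SSP. -/
theorem ssp_of_mu_vanishing_once {L : Type*} [Lattice L] [Fintype L] [BoundedOrder L]
    (hRC : IsRC L)
    (hmu : ∀ x y : L, x ≤ y → (x, y) ≠ ((⊥ : L), (⊤ : L)) → mu x y ≠ 0) :
    ∀ F : Set L, F.ncard ≤ (Str F).ncard := by
  intro F
  by_cases hF : F = Set.univ \ {⊥}
  · -- `F = L \ {⊥}`: direct counting using relative complementation
    have hsub : Set.univ \ {⊤} ⊆ Str F := by
      rintro z ⟨-, hz⟩
      simp only [Set.mem_singleton_iff] at hz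
      intro x hxz
      by_cases hx : x = ⊥
      · subst hx
        obtain ⟨w, hw0, hwz⟩ := exists_disjoint hRC z hz
        exact ⟨w, by simp [hF, hw0], hwz⟩
      · exact ⟨x, by simp [hF, hx], inf_eq_left.mpr hxz⟩
    calc F.ncard = (Set.univ \ {(⊥ : L)}).ncard := by rw [hF]
      _ = Set.univ.ncard - 1 := Set.ncard_diff_singleton_of_mem (Set.mem_univ _)
      _ = (Set.univ \ {(⊤ : L)}).ncard :=
          (Set.ncard_diff_singleton_of_mem (Set.mem_univ _)).symm
      _ ≤ (Str F).ncard := Set.ncard_le_ncard hsub (Set.toFinite _)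
  · -- otherwise every unshattered `z` has a witness with `mu x z ≠ 0`
    apply caseB
    intro z hz
    simp only [Str, Set.mem_setOf_eq, Shatters] at hz
    push_neg at hz
    obtain ⟨x, hxz, hx⟩ := hz
    by_cases hxz' : (x, z) = ((⊥ : L), (⊤ : L))
    · rw [Prod.mk.injEq] at hxz'
      obtain ⟨rfl, rfl⟩ := hxz'
      have hbot : (⊥ : L) ∉ F := fun hb => hx ⊥ hb (by simp)
      have hex : ∃ x', x' ∉ F ∧ x' ≠ ⊥ := by
        by_contra hc
        push_neg at hc
        apply hF
        ext u
        simp only [Set.mem_diff, Set.mem_univ, Set.mem_singleton_iff, true_and]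
        constructor
        · rintro hu rfl; exact hbot hu
        · intro hu; by_contra hc2; exact hu (hc u hc2)
      obtain ⟨x', hx'F, hx'0⟩ := hex
      refine ⟨x', le_top, fun w hw hww => ?_,
        hmu x' ⊤ le_top (by simp [Prod.ext_iff, hx'0])⟩
      rw [inf_top_eq] at hww
      exact hx'F (hww ▸ hw)
    · exact ⟨x, hxz, hx, hmu x z hxz hxz'⟩
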